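/- For every n ≥ 1, the following identity holds in the polynomial ring ℤ[a₁, …, a_n]: ∑_{k=1}^{n} (−1)^{k−1} ( ∏_{i=1, i≠k}^{n} (a_k + a_i) ) · ( ∏_{1 ≤ i < j ≤ n, i ≠ k, j ≠ k} (a_i − a_j) ) = δ_n · ∏_{1 ≤ i < j ≤ n} (a_i − a_j), where δ_n = 0 if n is even and δ_n = 1 if n is odd. -/

import Mathlib

theorem signA {R : Type*} [CommRing R] {n : ℕ} (x : Fin n → R) (k : Fin n) :
    ∏ p ∈ Finset.univ.filter (fun p : Fin n × Fin n => p.1 < p.2), (x p.1 - x p.2) =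
    (-1 : R) ^ (k : ℕ) * (∏ i ∈ Finset.univ.erase k, (x k - x i)) *
      ∏ p ∈ Finset.univ.filter
          (fun p : Fin n × Fin n => p.1 < p.2 ∧ p.1 ≠ k ∧ p.2 ≠ k),
        (x p.1 - x p.2) := by
  classical
  have hsplit := Finset.prod_filter_mul_prod_filter_not
    (Finset.univ.filter (fun p : Fin n × Fin n => p.1 < p.2))
    (fun p => p.1 ≠ k ∧ p.2 ≠ k) (fun p => x p.1 - x p.2)
  rw [Finset.filter_filter, Finset.filter_filter] at hsplit
  have htouch : ∏ p ∈ Finset.univ.filter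
      (fun p : Fin n × Fin n => p.1 < p.2 ∧ ¬(p.1 ≠ k ∧ p.2 ≠ k)), (x p.1 - x p.2) =
      ∏ i ∈ Finset.univ.erase k, (if i < k then -(1:R) else 1) * (x k - x i) := by
    refine Finset.prod_nbij' (fun p : Fin n × Fin n => if p.1 = k then p.2 else p.1)
      (fun i => if i < k then (i, k) else (k, i)) ?_ ?_ ?_ ?_ ?_
    · intro p hp
      simp only [Finset.mem_filter, Finset.mem_univ, true_and, not_and_or, not_not] at hp
      obtain ⟨hlt, h1 | h2⟩ := hp
      · rw [if_pos h1]
        simp only [Finset.mem_erase, Finset.mem_univ, and_true]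
        rw [← h1]; exact hlt.ne'
      · have hne : p.1 ≠ k := by rw [h2] at hlt; exact hlt.ne
        rw [if_neg hne]
        simp only [Finset.mem_erase, Finset.mem_univ, and_true]
        exact hne
    · intro i hi
      simp only [Finset.mem_erase, Finset.mem_univ, and_true] at hi
      by_cases h : i < k
      · rw [if_pos h]
        simp only [Finset.mem_filter, Finset.mem_univ, true_and, not_and_or, not_not]
        exact ⟨h, Or.inr trivial⟩
      · have h' : k < i := lt_of_le_of_ne (not_lt.mp h) (Ne.symm hi)
        rw [if_neg h]
        simp only [Finset.mem_filter, Finset.mem_univ, true_and, not_and_or, not_not]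
        exact ⟨h', Or.inl trivial⟩
    · intro p hp
      simp only [Finset.mem_filter, Finset.mem_univ, true_and, not_and_or, not_not] at hp
      obtain ⟨hlt, h1 | h2⟩ := hp
      · rw [if_pos h1]
        have hh : ¬ p.2 < k := by rw [← h1]; exact hlt.le.not_gt
        rw [if_neg hh, ← h1]
      · have hne : p.1 ≠ k := by rw [h2] at hlt; exact hlt.ne
        have hlt' : p.1 < k := h2 ▸ hlt
        rw [if_neg hne, if_pos hlt', ← h2]
    · intro i hi
      simp only [Finset.mem_erase, Finset.mem_univ, and_true] at hi
      by_cases h : i < k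
      · rw [if_pos h]; dsimp only; rw [if_neg h.ne]
      · have h' : k < i := lt_of_le_of_ne (not_lt.mp h) (Ne.symm hi)
        rw [if_neg h]; dsimp only; rw [if_pos rfl]
    · intro p hp
      simp only [Finset.mem_filter, Finset.mem_univ, true_and, not_and_or, not_not] at hp
      obtain ⟨hlt, h1 | h2⟩ := hp
      · rw [if_pos h1]
        have hh : ¬ p.2 < k := by rw [← h1]; exact hlt.le.not_gt
        rw [if_neg hh, one_mul, ← h1]
      · have hne : p.1 ≠ k := by rw [h2] at hlt; exact hlt.ne
        have hlt' : p.1 < k := h2 ▸ hlt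
        rw [if_neg hne, if_pos hlt', h2]; ring
  rw [htouch, Finset.prod_mul_distrib] at hsplit
  have hsign : (∏ i ∈ Finset.univ.erase k, (if i < k then -(1:R) else 1)) = (-1)^(k:ℕ) := by
    rw [Finset.prod_ite, Finset.prod_const, Finset.prod_const, one_pow, mul_one]
    congr 1
    have h1 : ((Finset.univ.erase k).filter (fun i => i < k)) = Finset.Iio k := by
      ext i
      simp only [Finset.mem_filter, Finset.mem_erase, Finset.mem_univ, true_and,
        Finset.mem_Iio, and_iff_right_iff_imp]
      exact fun h => ⟨h.ne, trivial⟩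
    rw [h1, Fin.card_Iio]
  rw [hsign] at hsplit
  linear_combination hsplit.symm

open Polynomial Finset in
theorem fieldB {K : Type*} [Field K] [CharZero K] {n : ℕ}
    (x : Fin n → K) (hinj : Function.Injective x) (hx0 : ∀ i, x i ≠ 0) :
    ∑ k : Fin n, ∏ i ∈ Finset.univ.erase k, ((x k + x i) / (x k - x i)) =
      (if Even n then 0 else 1) := by
  classical
  set p : K[X] := ∏ i : Fin n, (X + C (x i)) with hpdef
  set q : K[X] := ∏ i : Fin n, (X - C (x i)) with hqdef
  have hp : p.Monic := monic_prod_of_monic _ _ fun i _ => monic_X_add_C _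
  have hq : q.Monic := monic_prod_of_monic _ _ fun i _ => monic_X_sub_C _
  have hpd : p.natDegree = n := by
    rw [hpdef, natDegree_prod_of_monic _ _ fun i _ => monic_X_add_C _]
    simp [natDegree_X_add_C]
  have hqd : q.natDegree = n := by
    rw [hqdef, natDegree_prod_of_monic _ _ fun i _ => monic_X_sub_C _]
    simp
  have hdp : p.degree = (n : WithBot ℕ) := by rw [degree_eq_natDegree hp.ne_zero, hpd]
  have hdq : q.degree = (n : WithBot ℕ) := by rw [degree_eq_natDegree hq.ne_zero, hqd]
  have hdeg : (p - q).degree < (#(Finset.univ : Finset (Fin n)) : ℕ) := by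
    have := degree_sub_lt (hdp.trans hdq.symm) hp.ne_zero
      (hp.leadingCoeff.trans hq.leadingCoeff.symm)
    rw [hdp] at this
    simpa [card_univ] using this
  have hF := Lagrange.eq_interpolate (f := p - q) hinj.injOn hdeg
  have hev := congrArg (Polynomial.eval (0 : K)) hF
  have hevq : ∀ k, q.eval (x k) = 0 := fun k =>
    by rw [hqdef, eval_prod]; exact Finset.prod_eq_zero (mem_univ k) (by simp)
  have hevpk : ∀ k, p.eval (x k) = 2 * x k * ∏ i ∈ univ.erase k, (x k + x i) := by
    intro k
    rw [hpdef, eval_prod, ← Finset.mul_prod_erase _ _ (mem_univ k)]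
    simp only [eval_add, eval_X, eval_C]
    ring
  have hL : (p - q).eval 0 = (1 - (-1)^n) * ∏ i, x i := by
    rw [eval_sub, hpdef, hqdef, eval_prod, eval_prod]
    simp only [eval_add, eval_sub, eval_X, eval_C, zero_add, zero_sub]
    have : ∏ i : Fin n, -x i = (-1)^n * ∏ i : Fin n, x i := by
      rw [Finset.prod_congr rfl (fun i _ => (neg_one_mul (x i)).symm),
        Finset.prod_mul_distrib, Finset.prod_const, card_univ, Fintype.card_fin]
    rw [this]; ring
  have hR : (Lagrange.interpolate univ x (fun i => (p - q).eval (x i))).eval 0 =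
      ∑ k : Fin n, (2 * (-1:K)^(n-1) * ∏ i, x i) *
        ∏ i ∈ univ.erase k, ((x k + x i) / (x k - x i)) := by
    rw [Lagrange.interpolate_apply, eval_finset_sum]
    refine Finset.sum_congr rfl fun k _ => ?_
    rw [eval_mul, eval_C, eval_sub, hevq, hevpk, sub_zero]
    rw [Lagrange.basis, eval_prod]
    have hbd : ∀ i ∈ univ.erase k,
        (Lagrange.basisDivisor (x k) (x i)).eval 0 =
          (-1) * (x i / (x k - x i)) := by
      intro i _
      rw [Lagrange.basisDivisor, eval_mul, eval_C, eval_sub, eval_X, eval_C]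
      field_simp
      ring
    rw [Finset.prod_congr rfl hbd, Finset.prod_mul_distrib, Finset.prod_const]
    rw [Finset.card_erase_of_mem (mem_univ k), card_univ, Fintype.card_fin]
    have hsplit : ∏ i ∈ univ.erase k, (x i / (x k - x i)) =
        (∏ i ∈ univ.erase k, x i) * ∏ i ∈ univ.erase k, (1 / (x k - x i)) := by
      rw [← Finset.prod_mul_distrib]
      exact Finset.prod_congr rfl fun i _ => by ring
    have hsplit2 : ∏ i ∈ univ.erase k, ((x k + x i) / (x k - x i)) =
        (∏ i ∈ univ.erase k, (x k + x i)) * ∏ i ∈ univ.erase k, (1 / (x k - x i)) := by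
      rw [← Finset.prod_mul_distrib]
      exact Finset.prod_congr rfl fun i _ => by ring
    rw [hsplit, hsplit2, ← Finset.mul_prod_erase _ x (mem_univ k)]
    ring
  rw [hL, hR, ← Finset.mul_sum] at hev
  have hprod : (∏ i, x i) ≠ 0 := Finset.prod_ne_zero_iff.mpr fun i _ => hx0 i
  set S := ∑ k : Fin n, ∏ i ∈ univ.erase k, ((x k + x i) / (x k - x i)) with hS
  rcases Nat.even_or_odd n with he | ho
  · rw [if_pos he]
    rw [he.neg_one_pow] at hev
    have hc : (2 * (-1:K)^(n-1) * ∏ i, x i) ≠ 0 :=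
      mul_ne_zero (mul_ne_zero two_ne_zero
        (pow_ne_zero _ (neg_ne_zero.mpr one_ne_zero))) hprod
    have h0 : (2 * (-1:K)^(n-1) * ∏ i, x i) * S = 0 := by
      rw [← hev]; ring
    rcases mul_eq_zero.mp h0 with h | h
    · exact absurd h hc
    · exact h
  · rw [if_neg ((Nat.not_even_iff_odd.mpr ho))]
    have h1 : ((-1:K))^n = -1 := ho.neg_one_pow
    have h2 : ((-1:K))^(n-1) = 1 := (Nat.Odd.sub_odd ho odd_one).neg_one_pow
    rw [h1, h2] at hev
    have h3 : (2 * (∏ i, x i)) * 1 = (2 * (∏ i, x i)) * S := by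
      rw [mul_one]; linear_combination hev
    exact (mul_left_cancel₀ (mul_ne_zero two_ne_zero hprod) h3).symm

open scoped BigOperators

open MvPolynomial in
/-- The polynomial identity (1-indexed in the paper; here `k, i, j` run over `Fin n`,
so `(−1)^{k−1}` becomes `(−1)^{(k : ℕ)}`):
`∑ₖ (−1)^{k−1} (∏_{i≠k} (aₖ+aᵢ)) (∏_{i<j, i≠k, j≠k} (aᵢ−aⱼ)) = δₙ ∏_{i<j} (aᵢ−aⱼ)`
in `ℤ[a₁, …, a_n]`, where `δₙ = 0` for `n` even and `δₙ = 1` for `n` odd. -/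
theorem alternating_identity (n : ℕ) (hn : 1 ≤ n) :
    ∑ k : Fin n, (-1 : MvPolynomial (Fin n) ℤ) ^ (k : ℕ) *
        (∏ i ∈ Finset.univ.erase k, (X k + X i)) *
        ∏ p ∈ Finset.univ.filter
            (fun p : Fin n × Fin n => p.1 < p.2 ∧ p.1 ≠ k ∧ p.2 ≠ k),
          (X p.1 - X p.2) =
      (if Even n then 0 else 1) *
        ∏ p ∈ Finset.univ.filter (fun p : Fin n × Fin n => p.1 < p.2), (X p.1 - X p.2) := by
  classical
  set K := FractionRing (MvPolynomial (Fin n) ℤ) with hK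
  let φ : MvPolynomial (Fin n) ℤ →+* K := (algebraMap (MvPolynomial (Fin n) ℤ) K)
  have hφ : Function.Injective φ := IsFractionRing.injective _ _
  haveI : CharZero K := charZero_of_injective_algebraMap hφ
  apply hφ
  set x : Fin n → K := fun i => φ (X i) with hx
  have hxinj : Function.Injective x := fun i j h => X_injective (hφ h)
  have hx0 : ∀ i, x i ≠ 0 := fun i h => X_ne_zero i (hφ (by simpa using h))
  have hD : ∀ k : Fin n, (∏ i ∈ Finset.univ.erase k, (x k - x i)) ≠ 0 := by
    intro k
    refine Finset.prod_ne_zero_iff.mpr fun i hi => sub_ne_zero_of_ne ?_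
    exact fun h => (Finset.mem_erase.mp hi).1 (hxinj h).symm
  simp only [map_sum, map_mul, map_prod, map_pow, map_neg, map_one, map_add, map_sub,
    apply_ite φ, map_zero]
  have key : ∀ k : Fin n, (-1 : K) ^ (k : ℕ) * (∏ i ∈ Finset.univ.erase k, (x k + x i)) *
      (∏ p ∈ Finset.univ.filter
          (fun p : Fin n × Fin n => p.1 < p.2 ∧ p.1 ≠ k ∧ p.2 ≠ k), (x p.1 - x p.2)) =
      (∏ p ∈ Finset.univ.filter (fun p : Fin n × Fin n => p.1 < p.2), (x p.1 - x p.2)) *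
        ∏ i ∈ Finset.univ.erase k, ((x k + x i) / (x k - x i)) := by
    intro k
    rw [signA x k, Finset.prod_div_distrib]
    set N := ∏ i ∈ Finset.univ.erase k, (x k + x i) with hN
    set D := ∏ i ∈ Finset.univ.erase k, (x k - x i) with hDd
    set W := ∏ p ∈ Finset.univ.filter
        (fun p : Fin n × Fin n => p.1 < p.2 ∧ p.1 ≠ k ∧ p.2 ≠ k), (x p.1 - x p.2) with hW
    have h2 : ((-1:K)^(k:ℕ) * D * W) * (N / D) = ((-1:K)^(k:ℕ) * N * W) * (D / D) := by
      ring
    rw [h2, div_self (hD k), mul_one]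
  calc ∑ k : Fin n, (-1 : K) ^ (k : ℕ) * (∏ i ∈ Finset.univ.erase k, (x k + x i)) *
      (∏ p ∈ Finset.univ.filter
          (fun p : Fin n × Fin n => p.1 < p.2 ∧ p.1 ≠ k ∧ p.2 ≠ k), (x p.1 - x p.2))
      = ∑ k : Fin n,
        (∏ p ∈ Finset.univ.filter (fun p : Fin n × Fin n => p.1 < p.2), (x p.1 - x p.2)) *
          ∏ i ∈ Finset.univ.erase k, ((x k + x i) / (x k - x i)) :=
        Finset.sum_congr rfl fun k _ => key k
    _ = (∏ p ∈ Finset.univ.filter (fun p : Fin n × Fin n => p.1 < p.2), (x p.1 - x p.2)) *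
        ∑ k : Fin n, ∏ i ∈ Finset.univ.erase k, ((x k + x i) / (x k - x i)) := by
        rw [Finset.mul_sum]
    _ = (if Even n then 0 else 1) *
        ∏ p ∈ Finset.univ.filter (fun p : Fin n × Fin n => p.1 < p.2), (x p.1 - x p.2) := by
        rw [fieldB x hxinj hx0]; ring
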